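/- Hamilton's equations for the Dirac bracket reproduce Newton's constrained equations on the sphere: let V : ℝ^{n+1} → ℝ be continuously differentiable and H(x,y) = ½⟨y,y⟩ + V(x). Then at every point (x,y) with ⟨x,x⟩ = 1 and ⟨x,y⟩ = 0, the Dirac brackets satisfy, for every index ν, {x_ν, H} = y_ν and {y_ν, H} = −∂V/∂x_ν(x) + (⟨x, ∇V(x)⟩ − ⟨y,y⟩)·x_ν. -/

import Mathlib

noncomputable section

/-- The canonical Poisson bracket on `T*ℝ^N = ℝ^N × ℝ^N`:
`[f,g] = ∑ ν (∂f/∂x_ν · ∂g/∂y_ν − ∂f/∂y_ν · ∂g/∂x_ν)`. -/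
def canPB {N : ℕ} (f g : (Fin N → ℝ) × (Fin N → ℝ) → ℝ)
    (p : (Fin N → ℝ) × (Fin N → ℝ)) : ℝ :=
  ∑ i : Fin N,
    ((fderiv ℝ f p) ((Pi.single i 1 : Fin N → ℝ), 0) *
        (fderiv ℝ g p) (0, (Pi.single i 1 : Fin N → ℝ))
      - (fderiv ℝ f p) (0, (Pi.single i 1 : Fin N → ℝ)) *
        (fderiv ℝ g p) ((Pi.single i 1 : Fin N → ℝ), 0))

/-- The constraint function `C1(x,y) = ⟨x,x⟩`. -/
def C1fun {N : ℕ} (p : (Fin N → ℝ) × (Fin N → ℝ)) : ℝ := ∑ ν, p.1 ν * p.1 ν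

/-- The constraint function `C2(x,y) = ⟨x,y⟩`. -/
def C2fun {N : ℕ} (p : (Fin N → ℝ) × (Fin N → ℝ)) : ℝ := ∑ ν, p.1 ν * p.2 ν

/-- The Dirac bracket
`{f,g} = [f,g] + (1/(2C1))·[f,C1]·[C2,g] − (1/(2C1))·[f,C2]·[C1,g]`. -/
def diracPB {N : ℕ} (f g : (Fin N → ℝ) × (Fin N → ℝ) → ℝ)
    (p : (Fin N → ℝ) × (Fin N → ℝ)) : ℝ :=
  canPB f g p + (1 / (2 * C1fun p)) * canPB f C1fun p * canPB C2fun g p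
    - (1 / (2 * C1fun p)) * canPB f C2fun p * canPB C1fun g p

section aux
variable {N : ℕ}

abbrev PP (N : ℕ) := (Fin N → ℝ) × (Fin N → ℝ)

def Xc (ν : Fin N) : PP N →L[ℝ] ℝ :=
  (ContinuousLinearMap.proj ν).comp (ContinuousLinearMap.fst ℝ _ _)
def Yc (ν : Fin N) : PP N →L[ℝ] ℝ :=
  (ContinuousLinearMap.proj ν).comp (ContinuousLinearMap.snd ℝ _ _)

@[simp] lemma Xc_apply (ν : Fin N) (q : PP N) : Xc ν q = q.1 ν := rfl
@[simp] lemma Yc_apply (ν : Fin N) (q : PP N) : Yc ν q = q.2 ν := rfl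

lemma hasX (ν : Fin N) (p : PP N) : HasFDerivAt (fun q : PP N => q.1 ν) (Xc ν) p :=
  (Xc ν).hasFDerivAt
lemma hasY (ν : Fin N) (p : PP N) : HasFDerivAt (fun q : PP N => q.2 ν) (Yc ν) p :=
  (Yc ν).hasFDerivAt

lemma fderiv_x (ν : Fin N) (p : PP N) :
    fderiv ℝ (fun q : PP N => q.1 ν) p = Xc ν := (hasX ν p).fderiv
lemma fderiv_y (ν : Fin N) (p : PP N) :
    fderiv ℝ (fun q : PP N => q.2 ν) p = Yc ν := (hasY ν p).fderiv

lemma hasC1 (p : PP N) :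
    HasFDerivAt (C1fun (N := N)) (∑ μ, (p.1 μ • Xc μ + p.1 μ • Xc μ)) p :=
  HasFDerivAt.fun_sum fun μ _ => (hasX μ p).mul (hasX μ p)

lemma hasC2 (p : PP N) :
    HasFDerivAt (C2fun (N := N)) (∑ μ, (p.1 μ • Yc μ + p.2 μ • Xc μ)) p :=
  HasFDerivAt.fun_sum fun μ _ => (hasX μ p).mul (hasY μ p)

lemma fderiv_C1 (p : PP N) :
    fderiv ℝ (C1fun (N := N)) p = ∑ μ, (p.1 μ • Xc μ + p.1 μ • Xc μ) := (hasC1 p).fderiv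
lemma fderiv_C2 (p : PP N) :
    fderiv ℝ (C2fun (N := N)) p = ∑ μ, (p.1 μ • Yc μ + p.2 μ • Xc μ) := (hasC2 p).fderiv

lemma hasH (V : (Fin N → ℝ) → ℝ) (hV : ContDiff ℝ 1 V) (p : PP N) :
    HasFDerivAt (fun q : PP N => (1 / 2) * (∑ μ, q.2 μ * q.2 μ) + V q.1)
      ((1 / 2 : ℝ) • (∑ μ, (p.2 μ • Yc μ + p.2 μ • Yc μ))
        + (fderiv ℝ V p.1).comp (ContinuousLinearMap.fst ℝ _ _)) p :=
  ((HasFDerivAt.fun_sum fun μ _ => (hasY μ p).mul (hasY μ p)).const_mul (1/2)).add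
    (((hV.differentiable one_ne_zero p.1).hasFDerivAt).comp p (hasFDerivAt_fst))

-- evaluation simp lemmas


-- key sums
lemma sum_single_mul (a : Fin N → ℝ) (ν : Fin N) :
    ∑ i, (Pi.single i 1 : Fin N → ℝ) ν * a i = a ν := by
  simp [Pi.single_apply]

lemma sum_mul_single (a : Fin N → ℝ) (ν : Fin N) :
    ∑ i, a i * (Pi.single i 1 : Fin N → ℝ) ν = a ν := by
  simp [Pi.single_apply]

end aux

section eval
variable {N : ℕ}

lemma DC1_ex (p : PP N) (i : Fin N) :
    (fderiv ℝ (C1fun (N := N)) p) ((Pi.single i 1 : Fin N → ℝ), 0) = 2 * p.1 i := by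
  rw [fderiv_C1]
  simp [ContinuousLinearMap.sum_apply, Pi.single_apply, mul_ite, ite_mul, zero_mul, mul_zero, Finset.sum_ite_eq']
  rw [Finset.sum_add_distrib]
  simp [Finset.sum_ite_eq']
  ring

lemma DC1_ey (p : PP N) (i : Fin N) :
    (fderiv ℝ (C1fun (N := N)) p) (0, (Pi.single i 1 : Fin N → ℝ)) = 0 := by
  rw [fderiv_C1]
  simp [ContinuousLinearMap.sum_apply]

lemma DC2_ex (p : PP N) (i : Fin N) :
    (fderiv ℝ (C2fun (N := N)) p) ((Pi.single i 1 : Fin N → ℝ), 0) = p.2 i := by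
  rw [fderiv_C2]
  simp [ContinuousLinearMap.sum_apply, Pi.single_apply, mul_ite, ite_mul, zero_mul, mul_zero, Finset.sum_ite_eq']

lemma DC2_ey (p : PP N) (i : Fin N) :
    (fderiv ℝ (C2fun (N := N)) p) (0, (Pi.single i 1 : Fin N → ℝ)) = p.1 i := by
  rw [fderiv_C2]
  simp [ContinuousLinearMap.sum_apply, Pi.single_apply, mul_ite, ite_mul, zero_mul, mul_zero, Finset.sum_ite_eq']

lemma DH_ex (V : (Fin N → ℝ) → ℝ) (hV : ContDiff ℝ 1 V) (p : PP N) (i : Fin N) :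
    (fderiv ℝ (fun q : PP N => (1 / 2) * (∑ μ, q.2 μ * q.2 μ) + V q.1) p)
      ((Pi.single i 1 : Fin N → ℝ), 0) = fderiv ℝ V p.1 (Pi.single i 1) := by
  rw [(hasH V hV p).fderiv]
  simp [ContinuousLinearMap.sum_apply]

lemma DH_ey (V : (Fin N → ℝ) → ℝ) (hV : ContDiff ℝ 1 V) (p : PP N) (i : Fin N) :
    (fderiv ℝ (fun q : PP N => (1 / 2) * (∑ μ, q.2 μ * q.2 μ) + V q.1) p)
      (0, (Pi.single i 1 : Fin N → ℝ)) = p.2 i := by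
  rw [(hasH V hV p).fderiv]
  simp [ContinuousLinearMap.sum_apply, Pi.single_apply, mul_ite, ite_mul, zero_mul, mul_zero, Finset.sum_ite_eq']
  rw [Finset.sum_add_distrib]
  simp [Finset.sum_ite_eq']
  ring

lemma Dx_ex (ν : Fin N) (p : PP N) (i : Fin N) :
    (fderiv ℝ (fun q : PP N => q.1 ν) p) ((Pi.single i 1 : Fin N → ℝ), 0)
      = (Pi.single i 1 : Fin N → ℝ) ν := by rw [fderiv_x]; rfl

lemma Dx_ey (ν : Fin N) (p : PP N) (i : Fin N) :
    (fderiv ℝ (fun q : PP N => q.1 ν) p) (0, (Pi.single i 1 : Fin N → ℝ)) = 0 := by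
  rw [fderiv_x]; simp

lemma Dy_ex (ν : Fin N) (p : PP N) (i : Fin N) :
    (fderiv ℝ (fun q : PP N => q.2 ν) p) ((Pi.single i 1 : Fin N → ℝ), 0) = 0 := by
  rw [fderiv_y]; simp

lemma Dy_ey (ν : Fin N) (p : PP N) (i : Fin N) :
    (fderiv ℝ (fun q : PP N => q.2 ν) p) (0, (Pi.single i 1 : Fin N → ℝ))
      = (Pi.single i 1 : Fin N → ℝ) ν := by rw [fderiv_y]; rfl

end eval

section brackets
variable {N : ℕ}

lemma canPB_x_H (V : (Fin N → ℝ) → ℝ) (hV : ContDiff ℝ 1 V) (p : PP N) (ν : Fin N) :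
    canPB (fun q => q.1 ν) (fun q : PP N => (1 / 2) * (∑ μ, q.2 μ * q.2 μ) + V q.1) p
      = p.2 ν := by
  unfold canPB
  simp only [Dx_ex, Dx_ey, DH_ex V hV, DH_ey V hV, zero_mul, mul_zero, sub_zero]
  simp [Pi.single_apply, ite_mul, Finset.sum_ite_eq']

lemma canPB_y_H (V : (Fin N → ℝ) → ℝ) (hV : ContDiff ℝ 1 V) (p : PP N) (ν : Fin N) :
    canPB (fun q => q.2 ν) (fun q : PP N => (1 / 2) * (∑ μ, q.2 μ * q.2 μ) + V q.1) p
      = -(fderiv ℝ V p.1 (Pi.single ν 1)) := by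
  unfold canPB
  simp only [Dy_ex, Dy_ey, DH_ex V hV, DH_ey V hV, zero_mul, mul_zero, zero_sub]
  simp [Pi.single_apply, ite_mul, Finset.sum_ite_eq']

lemma canPB_x_C1 (p : PP N) (ν : Fin N) :
    canPB (fun q => q.1 ν) C1fun p = 0 := by
  unfold canPB
  simp only [Dx_ex, Dx_ey, DC1_ex, DC1_ey, zero_mul, mul_zero, sub_zero]
  simp

lemma canPB_x_C2 (p : PP N) (ν : Fin N) :
    canPB (fun q => q.1 ν) C2fun p = p.1 ν := by
  unfold canPB
  simp only [Dx_ex, Dx_ey, DC2_ex, DC2_ey, zero_mul, mul_zero, sub_zero]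
  simp [Pi.single_apply, ite_mul, Finset.sum_ite_eq']

lemma canPB_y_C1 (p : PP N) (ν : Fin N) :
    canPB (fun q => q.2 ν) C1fun p = -(2 * p.1 ν) := by
  unfold canPB
  simp only [Dy_ex, Dy_ey, DC1_ex, DC1_ey, zero_mul, mul_zero, zero_sub]
  simp [Pi.single_apply, ite_mul, Finset.sum_ite_eq']

lemma canPB_y_C2 (p : PP N) (ν : Fin N) :
    canPB (fun q => q.2 ν) C2fun p = -(p.2 ν) := by
  unfold canPB
  simp only [Dy_ex, Dy_ey, DC2_ex, DC2_ey, zero_mul, mul_zero, zero_sub]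
  simp [Pi.single_apply, ite_mul, Finset.sum_ite_eq']

lemma canPB_C1_H (V : (Fin N → ℝ) → ℝ) (hV : ContDiff ℝ 1 V) (p : PP N) :
    canPB C1fun (fun q : PP N => (1 / 2) * (∑ μ, q.2 μ * q.2 μ) + V q.1) p
      = 2 * ∑ μ, p.1 μ * p.2 μ := by
  unfold canPB
  simp only [DC1_ex, DC1_ey, DH_ex V hV, DH_ey V hV, zero_mul, mul_zero, sub_zero]
  rw [Finset.mul_sum]
  exact Finset.sum_congr rfl fun i _ => by ring

lemma canPB_C2_H (V : (Fin N → ℝ) → ℝ) (hV : ContDiff ℝ 1 V) (p : PP N) :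
    canPB C2fun (fun q : PP N => (1 / 2) * (∑ μ, q.2 μ * q.2 μ) + V q.1) p
      = (∑ μ, p.2 μ * p.2 μ) - ∑ μ, p.1 μ * fderiv ℝ V p.1 (Pi.single μ 1) := by
  unfold canPB
  simp only [DC2_ex, DC2_ey, DH_ex V hV, DH_ey V hV]
  rw [Finset.sum_sub_distrib]

end brackets

/-- **Hamilton's equations for the Dirac bracket reproduce Newton's constrained equations
on the sphere.**  For a `C¹` potential `V : ℝ^{n+1} → ℝ` and `H(x,y) = ½⟨y,y⟩ + V(x)`,
at every point with `⟨x,x⟩ = 1` and `⟨x,y⟩ = 0` the Dirac brackets satisfy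
`{x_ν, H} = y_ν` and `{y_ν, H} = −∂V/∂x_ν(x) + (⟨x,∇V(x)⟩ − ⟨y,y⟩)·x_ν`. -/
theorem stmt8 (n : ℕ) (V : (Fin (n + 1) → ℝ) → ℝ) (hV : ContDiff ℝ 1 V)
    (H : (Fin (n + 1) → ℝ) × (Fin (n + 1) → ℝ) → ℝ)
    (hH : H = fun q => (1 / 2) * (∑ μ, q.2 μ * q.2 μ) + V q.1)
    (p : (Fin (n + 1) → ℝ) × (Fin (n + 1) → ℝ))
    (h1 : ∑ ν, p.1 ν * p.1 ν = 1) (h2 : ∑ ν, p.1 ν * p.2 ν = 0) (ν : Fin (n + 1)) :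
    diracPB (fun q => q.1 ν) H p = p.2 ν ∧
    diracPB (fun q => q.2 ν) H p
      = -(fderiv ℝ V p.1 (Pi.single ν 1))
        + ((∑ μ, p.1 μ * fderiv ℝ V p.1 (Pi.single μ 1)) - ∑ μ, p.2 μ * p.2 μ) * p.1 ν := by
  subst hH
  have hc1 : C1fun p = 1 := h1
  constructor
  · rw [diracPB, canPB_x_H V hV, canPB_x_C1, canPB_x_C2, canPB_C1_H V hV, canPB_C2_H V hV,
      hc1, h2]
    ring
  · rw [diracPB, canPB_y_H V hV, canPB_y_C1, canPB_y_C2, canPB_C1_H V hV, canPB_C2_H V hV,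
      hc1, h2]
    ring
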